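/- arXiv:2208.05654 — 2 statements merged into one kernel-verified Lean document; each statement's English description precedes it below -/
import Mathlib

section
/- For any A > 0, σ > 0, and integer K ≥ 2, the lower bound F₂(A,K,σ) = (1/2)·log(1 + K²A²/(2πe(K−1)²σ²)) − (1/2)·log(1 + A²/(12(K−1)²σ²)) satisfies F₂(A,K,σ) ≥ R_OWB(A,K,σ), where R_OWB(A,K,σ) = log K − (1/2)·log(2πe/12) − (1/2)·log(1 + 12(K−1)²σ²/A²). -/
open Real

/-- F₂(A,K,σ) ≥ R_OWB(A,K,σ): the ESDU rate lower bound from continuous-uniform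
capacity bounds dominates the Ozarow–Wyner-B bound. -/
theorem stmt1 (A σ : ℝ) (K : ℕ) (hA : 0 < A) (hσ : 0 < σ) (hK : 2 ≤ K) :
    logb 2 K - (1 / 2) * logb 2 (2 * π * exp 1 / 12)
      - (1 / 2) * logb 2 (1 + 12 * ((K : ℝ) - 1) ^ 2 * σ ^ 2 / A ^ 2)
    ≤ (1 / 2) * logb 2 (1 + (K : ℝ) ^ 2 * A ^ 2 / (2 * π * exp 1 * ((K : ℝ) - 1) ^ 2 * σ ^ 2))
      - (1 / 2) * logb 2 (1 + A ^ 2 / (12 * ((K : ℝ) - 1) ^ 2 * σ ^ 2)) := by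
  have hπ := Real.pi_pos
  have he : (0:ℝ) < exp 1 := exp_pos 1
  have hKR : (2:ℝ) ≤ (K:ℝ) := by exact_mod_cast hK
  have hK1 : (0:ℝ) < (K:ℝ) - 1 := by linarith
  have hK0 : (0:ℝ) < (K:ℝ) := by linarith
  have hA2 : (0:ℝ) < A ^ 2 := by positivity
  have hB : (0:ℝ) < ((K:ℝ) - 1) ^ 2 * σ ^ 2 := by positivity
  have hc : (0:ℝ) < 2 * π * exp 1 := by positivity
  have hN : (0:ℝ) < 12 * (((K:ℝ) - 1) ^ 2 * σ ^ 2) + A ^ 2 := by positivity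
  have hM : (0:ℝ) < (2 * π * exp 1) * (((K:ℝ) - 1) ^ 2 * σ ^ 2) + (K:ℝ) ^ 2 * A ^ 2 := by
    positivity
  have e1 : 1 + 12 * ((K : ℝ) - 1) ^ 2 * σ ^ 2 / A ^ 2
      = (12 * (((K:ℝ) - 1) ^ 2 * σ ^ 2) + A ^ 2) / A ^ 2 := by
    field_simp; ring
  have e2 : 1 + (K : ℝ) ^ 2 * A ^ 2 / (2 * π * exp 1 * ((K : ℝ) - 1) ^ 2 * σ ^ 2)
      = ((2 * π * exp 1) * (((K:ℝ) - 1) ^ 2 * σ ^ 2) + (K:ℝ) ^ 2 * A ^ 2)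
        / ((2 * π * exp 1) * (((K:ℝ) - 1) ^ 2 * σ ^ 2)) := by
    field_simp
  have e3 : 1 + A ^ 2 / (12 * ((K : ℝ) - 1) ^ 2 * σ ^ 2)
      = (12 * (((K:ℝ) - 1) ^ 2 * σ ^ 2) + A ^ 2) / (12 * (((K:ℝ) - 1) ^ 2 * σ ^ 2)) := by
    field_simp
  rw [e1, e2, e3,
    Real.logb_div hN.ne' hA2.ne',
    Real.logb_div hM.ne' (by positivity),
    Real.logb_div hN.ne' (by positivity),
    Real.logb_div hc.ne' (by norm_num),
    Real.logb_mul hc.ne' hB.ne',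
    show (12 : ℝ) * (((K:ℝ) - 1) ^ 2 * σ ^ 2) = 12 * (((K:ℝ) - 1) ^ 2 * σ ^ 2) from rfl,
    Real.logb_mul (by norm_num : (12:ℝ) ≠ 0) hB.ne']
  have hsplit : logb 2 ((K:ℝ) ^ 2 * A ^ 2) = 2 * logb 2 (K:ℝ) + logb 2 (A ^ 2) := by
    rw [Real.logb_mul (by positivity) hA2.ne', Real.logb_pow]
    push_cast
    ring
  have key : logb 2 ((K:ℝ) ^ 2 * A ^ 2)
      ≤ logb 2 ((2 * π * exp 1) * (((K:ℝ) - 1) ^ 2 * σ ^ 2) + (K:ℝ) ^ 2 * A ^ 2) := by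
    have h1 : (0:ℝ) < (K:ℝ) ^ 2 * A ^ 2 := by positivity
    gcongr
    · norm_num
    · nlinarith
  linarith [hsplit, key]
end

section
/- For mutually independent random variables X (discrete, finite), U (continuous with finite differential entropy h(U)), and Z ~ N(0,σ²), the entropy power inequality implies I(X;X+Z) ≤ (1/2)·log( 2^{2·I(X+U;X+U+Z)} − 2^{2h(U)}/(2πeσ²) ). -/
open Real

/-- The entropy power inequality implies
I(X;X+Z) ≤ (1/2)·log₂(2^{2I(X+U;X+U+Z)} − 2^{2h(U)}/(2πeσ²)).
Here `I` = I(X;X+Z), `IXU` = I(X+U;X+U+Z), `hU` = h(U), `hXZ` = h(X+Z),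
`hXUZ` = h(X+U+Z), with h(X+Z) = (1/2)log₂(2πeσ²) + I(X;X+Z), the identity
I = IXU − h(X+U+Z) + h(X+Z), and the EPI h(X+U+Z) ≥ (1/2)log₂(2^{2h(U)} + 2^{2h(X+Z)}). -/
theorem stmt7 (σ I IXU hU hXZ hXUZ : ℝ) (hσ : 0 < σ)
    (h1 : hXZ = (1 / 2) * logb 2 (2 * π * exp 1 * σ ^ 2) + I)
    (h2 : I = IXU - hXUZ + hXZ)
    (hEPI : hXUZ ≥ (1 / 2) * logb 2 ((2 : ℝ) ^ (2 * hU) + (2 : ℝ) ^ (2 * hXZ))) :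
    I ≤ (1 / 2) * logb 2 ((2 : ℝ) ^ (2 * IXU) - (2 : ℝ) ^ (2 * hU) / (2 * π * exp 1 * σ ^ 2)) := by
  set A : ℝ := 2 * π * exp 1 * σ ^ 2 with hA
  have hApos : 0 < A := by positivity
  have h2pos : (0:ℝ) < 2 := by norm_num
  have h1lt2 : (1:ℝ) < 2 := by norm_num
  -- 2^{2 hXZ} = A * 2^{2 I}
  have hXZpow : (2:ℝ) ^ (2 * hXZ) = A * (2:ℝ) ^ (2 * I) := by
    rw [h1]
    have : 2 * ((1 / 2) * logb 2 A + I) = logb 2 A + 2 * I := by ring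
    rw [this, rpow_add h2pos, rpow_logb h2pos (by norm_num) hApos]
  -- EPI gives 2^{2(IXU + hXZ - I)} ≥ 2^{2hU} + 2^{2hXZ}
  have hsum_pos : (0:ℝ) < (2:ℝ) ^ (2 * hU) + (2:ℝ) ^ (2 * hXZ) := by positivity
  have hkey : (2:ℝ) ^ (2 * (IXU + hXZ - I)) ≥ (2:ℝ) ^ (2 * hU) + (2:ℝ) ^ (2 * hXZ) := by
    have hXUZ' : IXU + hXZ - I = hXUZ := by linarith
    rw [hXUZ']
    calc (2:ℝ) ^ (2 * hXUZ) ≥ (2:ℝ) ^ (2 * ((1 / 2) * logb 2 ((2:ℝ) ^ (2 * hU) + (2:ℝ) ^ (2 * hXZ)))) := by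
          apply rpow_le_rpow_left_iff h1lt2 |>.mpr
          linarith
      _ = (2:ℝ) ^ (logb 2 ((2:ℝ) ^ (2 * hU) + (2:ℝ) ^ (2 * hXZ))) := by ring_nf
      _ = (2:ℝ) ^ (2 * hU) + (2:ℝ) ^ (2 * hXZ) := rpow_logb h2pos (by norm_num) hsum_pos
  -- rewrite LHS of hkey
  have hexpand : (2:ℝ) ^ (2 * (IXU + hXZ - I)) = (2:ℝ) ^ (2 * IXU) * (A * (2:ℝ) ^ (2 * I)) / (2:ℝ) ^ (2 * I) := by
    rw [← hXZpow]
    rw [show 2 * (IXU + hXZ - I) = 2 * IXU + 2 * hXZ - 2 * I by ring]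
    rw [rpow_sub h2pos, rpow_add h2pos]
  have hIpow : (0:ℝ) < (2:ℝ) ^ (2 * I) := by positivity
  have hexpand2 : (2:ℝ) ^ (2 * (IXU + hXZ - I)) = (2:ℝ) ^ (2 * IXU) * A := by
    rw [hexpand]; field_simp
  rw [hexpand2, hXZpow] at hkey
  -- divide by A: 2^{2IXU} ≥ 2^{2hU}/A + 2^{2I}
  have hmain : (2:ℝ) ^ (2 * I) ≤ (2:ℝ) ^ (2 * IXU) - (2:ℝ) ^ (2 * hU) / A := by
    rw [ge_iff_le, ← sub_nonneg] at hkey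
    rw [← sub_nonneg]
    have := div_nonneg hkey hApos.le
    calc (0:ℝ) ≤ ((2:ℝ) ^ (2 * IXU) * A - ((2:ℝ) ^ (2 * hU) + A * (2:ℝ) ^ (2 * I))) / A := this
      _ = (2:ℝ) ^ (2 * IXU) - (2:ℝ) ^ (2 * hU) / A - (2:ℝ) ^ (2 * I) := by
          field_simp; ring
  -- take logs
  have : logb 2 ((2:ℝ) ^ (2 * I)) ≤ logb 2 ((2:ℝ) ^ (2 * IXU) - (2:ℝ) ^ (2 * hU) / A) :=
    logb_le_logb_of_le (by norm_num) hIpow hmain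
  rw [logb_rpow (by norm_num : (0:ℝ) < 2) (by norm_num : (2:ℝ) ≠ 1)] at this
  linarith
end
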